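/- arXiv:1003.0915 — 8 statements merged into one kernel-verified Lean document; each statement's English description precedes it below -/
import Mathlib

section
/- In the pointwise model of a paraquaternionic CR-submanifold one has J_α(ν_α) = D^⊥ for each α = 1, 2, 3, and moreover J₁(ν₂) = ν₃, J₂(ν₃) = ν₁, and J₃(ν₁) = ν₂. -/
/-- The `g`-orthogonal complement of `S` taken inside `W`:
`{w ∈ W | ∀ s ∈ S, g w s = 0}`. -/
def orthIn {V : Type*} [AddCommGroup V] [Module ℝ V]
    (g : LinearMap.BilinForm ℝ V) (W S : Submodule ℝ V) : Submodule ℝ V where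
  carrier := {w | w ∈ W ∧ ∀ s ∈ S, g w s = 0}
  add_mem' := fun {a b} ha hb => ⟨W.add_mem ha.1 hb.1, fun s hs => by
    simp [ha.2 s hs, hb.2 s hs]⟩
  zero_mem' := ⟨W.zero_mem, fun s _ => by simp⟩
  smul_mem' := fun c x hx => ⟨W.smul_mem c hx.1, fun s hs => by
    simp [hx.2 s hs]⟩

/-- Pointwise model of a paraquaternionic CR-submanifold:
`J_α(ν_α) = D^⊥` for each `α`, and `J₁(ν₂) = ν₃`, `J₂(ν₃) = ν₁`, `J₃(ν₁) = ν₂`,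
where `ν_α := J_α(D^⊥)`, `D^⊥` the `g`-orthogonal complement of `D` in `W` and
`W^⊥` the `g`-orthogonal complement of `W` in `V`. -/
theorem paraquaternionic_CR_nu_images
    (V : Type*) [AddCommGroup V] [Module ℝ V] [FiniteDimensional ℝ V]
    (g : LinearMap.BilinForm ℝ V)
    (hsymm : ∀ x y : V, g x y = g y x)
    (hnd : g.Nondegenerate)
    (J1 J2 J3 : V →ₗ[ℝ] V)
    (h11 : J1 ∘ₗ J1 = -LinearMap.id)
    (h22 : J2 ∘ₗ J2 = LinearMap.id)
    (h33 : J3 ∘ₗ J3 = LinearMap.id)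
    (h12 : J1 ∘ₗ J2 = -J3) (h21 : J2 ∘ₗ J1 = J3)
    (h23 : J2 ∘ₗ J3 = J1) (h32 : J3 ∘ₗ J2 = -J1)
    (h31 : J3 ∘ₗ J1 = -J2) (h13 : J1 ∘ₗ J3 = J2)
    (hg1 : ∀ x y : V, g (J1 x) (J1 y) = g x y)
    (hg2 : ∀ x y : V, g (J2 x) (J2 y) = -g x y)
    (hg3 : ∀ x y : V, g (J3 x) (J3 y) = -g x y)
    (W D : Submodule ℝ V) (hDW : D ≤ W)
    (hWnd : ∀ w ∈ W, (∀ w' ∈ W, g w w' = 0) → w = 0)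
    (hDnd : ∀ d ∈ D, (∀ d' ∈ D, g d d' = 0) → d = 0)
    (hJ1D : D.map J1 = D) (hJ2D : D.map J2 = D) (hJ3D : D.map J3 = D)
    (hCR1 : (orthIn g W D).map J1 ≤ orthIn g ⊤ W)
    (hCR2 : (orthIn g W D).map J2 ≤ orthIn g ⊤ W)
    (hCR3 : (orthIn g W D).map J3 ≤ orthIn g ⊤ W) :
    ((orthIn g W D).map J1).map J1 = orthIn g W D ∧
    ((orthIn g W D).map J2).map J2 = orthIn g W D ∧
    ((orthIn g W D).map J3).map J3 = orthIn g W D ∧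
    ((orthIn g W D).map J2).map J1 = (orthIn g W D).map J3 ∧
    ((orthIn g W D).map J3).map J2 = (orthIn g W D).map J1 ∧
    ((orthIn g W D).map J1).map J3 = (orthIn g W D).map J2 := by
  refine ⟨?_, ?_, ?_, ?_, ?_, ?_⟩ <;>
  rw [← Submodule.map_comp]
  · rw [h11, Submodule.map_neg, Submodule.map_id]
  · rw [h22, Submodule.map_id]
  · rw [h33, Submodule.map_id]
  · rw [h12, Submodule.map_neg]
  · rw [h23]
  · rw [h31, Submodule.map_neg]
end

section
/- In the pointwise model of a paraquaternionic CR-submanifold, the subspaces ν₁, ν₂, ν₃ of W^⊥ are pairwise g-orthogonal, the restriction of g to each ν_α is nondegenerate, the sum ν^⊥ := ν₁ + ν₂ + ν₃ is a direct sum, and dim ν^⊥ = 3 · dim D^⊥. -/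
/-- Pointwise model of a paraquaternionic CR-submanifold: the subspaces
`ν_α := J_α(D^⊥)` of `W^⊥` are pairwise `g`-orthogonal, `g` restricted to each `ν_α`
is nondegenerate, the sum `ν^⊥ := ν₁ + ν₂ + ν₃` is direct, and
`dim ν^⊥ = 3 · dim D^⊥`. -/
theorem paraquaternionic_CR_nu_decomposition
    (V : Type*) [AddCommGroup V] [Module ℝ V] [FiniteDimensional ℝ V]
    (g : LinearMap.BilinForm ℝ V)
    (hsymm : ∀ x y : V, g x y = g y x)
    (hnd : g.Nondegenerate)
    (J1 J2 J3 : V →ₗ[ℝ] V)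
    (h11 : J1 ∘ₗ J1 = -LinearMap.id)
    (h22 : J2 ∘ₗ J2 = LinearMap.id)
    (h33 : J3 ∘ₗ J3 = LinearMap.id)
    (h12 : J1 ∘ₗ J2 = -J3) (h21 : J2 ∘ₗ J1 = J3)
    (h23 : J2 ∘ₗ J3 = J1) (h32 : J3 ∘ₗ J2 = -J1)
    (h31 : J3 ∘ₗ J1 = -J2) (h13 : J1 ∘ₗ J3 = J2)
    (hg1 : ∀ x y : V, g (J1 x) (J1 y) = g x y)
    (hg2 : ∀ x y : V, g (J2 x) (J2 y) = -g x y)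
    (hg3 : ∀ x y : V, g (J3 x) (J3 y) = -g x y)
    (W D : Submodule ℝ V) (hDW : D ≤ W)
    (hWnd : ∀ w ∈ W, (∀ w' ∈ W, g w w' = 0) → w = 0)
    (hDnd : ∀ d ∈ D, (∀ d' ∈ D, g d d' = 0) → d = 0)
    (hJ1D : D.map J1 = D) (hJ2D : D.map J2 = D) (hJ3D : D.map J3 = D)
    (hCR1 : (orthIn g W D).map J1 ≤ orthIn g ⊤ W)
    (hCR2 : (orthIn g W D).map J2 ≤ orthIn g ⊤ W)
    (hCR3 : (orthIn g W D).map J3 ≤ orthIn g ⊤ W) :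
    (∀ x ∈ (orthIn g W D).map J1, ∀ y ∈ (orthIn g W D).map J2, g x y = 0) ∧
    (∀ x ∈ (orthIn g W D).map J1, ∀ y ∈ (orthIn g W D).map J3, g x y = 0) ∧
    (∀ x ∈ (orthIn g W D).map J2, ∀ y ∈ (orthIn g W D).map J3, g x y = 0) ∧
    (∀ x ∈ (orthIn g W D).map J1,
      (∀ y ∈ (orthIn g W D).map J1, g x y = 0) → x = 0) ∧
    (∀ x ∈ (orthIn g W D).map J2,
      (∀ y ∈ (orthIn g W D).map J2, g x y = 0) → x = 0) ∧
    (∀ x ∈ (orthIn g W D).map J3,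
      (∀ y ∈ (orthIn g W D).map J3, g x y = 0) → x = 0) ∧
    (∀ x1 ∈ (orthIn g W D).map J1, ∀ x2 ∈ (orthIn g W D).map J2,
      ∀ x3 ∈ (orthIn g W D).map J3,
        x1 + x2 + x3 = 0 → x1 = 0 ∧ x2 = 0 ∧ x3 = 0) ∧
    Module.finrank ℝ
        ↥((orthIn g W D).map J1 ⊔ (orthIn g W D).map J2 ⊔ (orthIn g W D).map J3)
      = 3 * Module.finrank ℝ ↥(orthIn g W D) := by

  -- pointwise composition identities
  have p11 : ∀ x : V, J1 (J1 x) = -x := fun x => by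
    have := LinearMap.congr_fun h11 x; simpa using this
  have p22 : ∀ x : V, J2 (J2 x) = x := fun x => by
    have := LinearMap.congr_fun h22 x; simpa using this
  have p12 : ∀ x : V, J1 (J2 x) = -J3 x := fun x => by
    have := LinearMap.congr_fun h12 x; simpa using this
  have p13 : ∀ x : V, J1 (J3 x) = J2 x := fun x => by
    have := LinearMap.congr_fun h13 x; simpa using this
  have p23 : ∀ x : V, J2 (J3 x) = J1 x := fun x => by
    have := LinearMap.congr_fun h23 x; simpa using this
  set Dp := orthIn g W D with hDp
  -- membership characterization
  have memDp : ∀ x, x ∈ Dp ↔ x ∈ W ∧ ∀ s ∈ D, g x s = 0 := fun x => Iff.rfl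
  -- J_α of D^⊥ lands in W^⊥ : concrete form
  have perp1 : ∀ u ∈ Dp, ∀ w ∈ W, g (J1 u) w = 0 := fun u hu w hw =>
    (hCR1 ⟨u, hu, rfl⟩).2 w hw
  have perp2 : ∀ u ∈ Dp, ∀ w ∈ W, g (J2 u) w = 0 := fun u hu w hw =>
    (hCR2 ⟨u, hu, rfl⟩).2 w hw
  have perp3 : ∀ u ∈ Dp, ∀ w ∈ W, g (J3 u) w = 0 := fun u hu w hw =>
    (hCR3 ⟨u, hu, rfl⟩).2 w hw
  -- pairwise orthogonality
  have orth12 : ∀ x ∈ Dp.map J1, ∀ y ∈ Dp.map J2, g x y = 0 := by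
    rintro _ ⟨u, hu, rfl⟩ _ ⟨v, hv, rfl⟩
    have : g (J1 (J1 u)) (J1 (J2 v)) = g (J1 u) (J2 v) := hg1 _ _
    rw [p11, p12] at this
    simp only [map_neg, LinearMap.neg_apply, neg_neg] at this
    rw [← this, hsymm]
    exact perp3 v hv u hu.1
  have orth13 : ∀ x ∈ Dp.map J1, ∀ y ∈ Dp.map J3, g x y = 0 := by
    rintro _ ⟨u, hu, rfl⟩ _ ⟨v, hv, rfl⟩
    have : g (J1 (J1 u)) (J1 (J3 v)) = g (J1 u) (J3 v) := hg1 _ _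
    rw [p11, p13] at this
    simp only [map_neg, LinearMap.neg_apply] at this
    rw [← this, neg_eq_zero, hsymm]
    exact perp2 v hv u hu.1
  have orth23 : ∀ x ∈ Dp.map J2, ∀ y ∈ Dp.map J3, g x y = 0 := by
    rintro _ ⟨u, hu, rfl⟩ _ ⟨v, hv, rfl⟩
    have : g (J2 (J2 u)) (J2 (J3 v)) = -g (J2 u) (J3 v) := hg2 _ _
    rw [p22, p23] at this
    have h0 : g u (J1 v) = 0 := by rw [hsymm]; exact perp1 v hv u hu.1
    rw [h0] at this
    linarith [this]
  -- g nondegenerate on D^⊥ : first show W = D ⊔ Dp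
  have hrefl : g.IsRefl := fun x y h => by rw [hsymm]; exact h
  have hDrestrict : (g.restrict D).Nondegenerate := by
    refine (LinearMap.IsRefl.nondegenerate_iff_separatingLeft (B := g.restrict D) (fun x y h => hrefl x y h)).2 ?_
    rintro ⟨d, hd⟩ h
    refine Subtype.ext (hDnd d hd fun d' hd' => ?_)
    simpa using h ⟨d', hd'⟩
  have hcompl := g.isCompl_orthogonal_of_restrict_nondegenerate hrefl hDrestrict
  have hDpeq : Dp = W ⊓ g.orthogonal D := by
    ext x
    simp only [Submodule.mem_inf, LinearMap.BilinForm.mem_orthogonal_iff]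
    constructor
    · rintro ⟨hx, h⟩
      exact ⟨hx, fun n hn => hrefl _ _ (h n hn)⟩
    · rintro ⟨hx, h⟩
      exact ⟨hx, fun s hs => hrefl _ _ (h s hs)⟩
  have hWsup : D ⊔ Dp = W := by
    rw [hDpeq, inf_comm, ← sup_inf_assoc_of_le _ hDW, hcompl.sup_eq_top, top_inf_eq]
  have ndDp : ∀ u ∈ Dp, (∀ v ∈ Dp, g u v = 0) → u = 0 := by
    intro u hu h
    refine hWnd u hu.1 fun w hw => ?_
    rw [← hWsup] at hw
    obtain ⟨d, hd, p, hp, rfl⟩ := Submodule.mem_sup.1 hw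
    rw [map_add, hu.2 d hd, h p hp, add_zero]
  -- nondegeneracy on each ν_α
  have nd1 : ∀ x ∈ Dp.map J1, (∀ y ∈ Dp.map J1, g x y = 0) → x = 0 := by
    rintro _ ⟨u, hu, rfl⟩ h
    have : u = 0 := ndDp u hu fun v hv => by
      rw [← hg1 u v]; exact h _ ⟨v, hv, rfl⟩
    rw [this, map_zero]
  have nd2 : ∀ x ∈ Dp.map J2, (∀ y ∈ Dp.map J2, g x y = 0) → x = 0 := by
    rintro _ ⟨u, hu, rfl⟩ h
    have : u = 0 := ndDp u hu fun v hv => by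
      have := hg2 u v
      rw [h _ ⟨v, hv, rfl⟩] at this
      linarith
    rw [this, map_zero]
  have nd3 : ∀ x ∈ Dp.map J3, (∀ y ∈ Dp.map J3, g x y = 0) → x = 0 := by
    rintro _ ⟨u, hu, rfl⟩ h
    have : u = 0 := ndDp u hu fun v hv => by
      have := hg3 u v
      rw [h _ ⟨v, hv, rfl⟩] at this
      linarith
    rw [this, map_zero]
  -- directness
  have direct : ∀ x1 ∈ Dp.map J1, ∀ x2 ∈ Dp.map J2, ∀ x3 ∈ Dp.map J3,
      x1 + x2 + x3 = 0 → x1 = 0 ∧ x2 = 0 ∧ x3 = 0 := by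
    intro x1 h1 x2 h2 x3 h3 hsum
    have e1 : x1 = 0 := by
      refine nd1 x1 h1 fun y hy => ?_
      have : g (x1 + x2 + x3) y = 0 := by rw [hsum, map_zero, LinearMap.zero_apply]
      simp only [map_add, LinearMap.add_apply] at this
      rw [hsymm x2 y, hsymm x3 y] at this
      rw [orth12 y hy x2 h2, orth13 y hy x3 h3] at this
      linarith
    have e2 : x2 = 0 := by
      refine nd2 x2 h2 fun y hy => ?_
      have : g (x1 + x2 + x3) y = 0 := by rw [hsum, map_zero, LinearMap.zero_apply]
      simp only [map_add, LinearMap.add_apply] at this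
      rw [orth12 x1 h1 y hy] at this
      rw [hsymm x3 y, orth23 y hy x3 h3] at this
      linarith
    have e3 : x3 = 0 := by
      rw [e1, e2] at hsum; simpa using hsum
    exact ⟨e1, e2, e3⟩
  -- dimensions
  have inj1 : Function.Injective J1 := by
    intro a b hab
    have : J1 (J1 a) = J1 (J1 b) := by rw [hab]
    rw [p11, p11] at this; exact neg_injective this
  have inj2 : Function.Injective J2 := by
    intro a b hab
    have : J2 (J2 a) = J2 (J2 b) := by rw [hab]
    rwa [p22, p22] at this
  have inj3 : Function.Injective J3 := by
    intro a b hab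
    have : J3 (J3 a) = J3 (J3 b) := by
      rw [hab]
    have e : ∀ x : V, J3 (J3 x) = x := fun x => by
      have := LinearMap.congr_fun h33 x; simpa using this
    rwa [e, e] at this
  have fr1 : Module.finrank ℝ (Dp.map J1) = Module.finrank ℝ Dp :=
    (Submodule.equivMapOfInjective J1 inj1 Dp).finrank_eq.symm
  have fr2 : Module.finrank ℝ (Dp.map J2) = Module.finrank ℝ Dp :=
    (Submodule.equivMapOfInjective J2 inj2 Dp).finrank_eq.symm
  have fr3 : Module.finrank ℝ (Dp.map J3) = Module.finrank ℝ Dp :=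
    (Submodule.equivMapOfInjective J3 inj3 Dp).finrank_eq.symm
  have disj12 : Dp.map J1 ⊓ Dp.map J2 = ⊥ := by
    rw [eq_bot_iff]
    intro x hx
    obtain ⟨hx1, hx2⟩ := Submodule.mem_inf.1 hx
    have : x = 0 := nd1 x hx1 fun y hy => by
      rw [hsymm]; exact orth12 y hy x hx2
    simp [this]
  have disj123 : (Dp.map J1 ⊔ Dp.map J2) ⊓ Dp.map J3 = ⊥ := by
    rw [eq_bot_iff]
    intro x hx
    obtain ⟨hx12, hx3⟩ := Submodule.mem_inf.1 hx
    obtain ⟨a, ha, b, hb, rfl⟩ := Submodule.mem_sup.1 hx12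
    have : a + b = 0 := nd3 _ hx3 fun y hy => by
      rw [map_add, LinearMap.add_apply, orth13 a ha y hy, orth23 b hb y hy, add_zero]
    simp [this]
  have key12 := Submodule.finrank_sup_add_finrank_inf_eq (Dp.map J1) (Dp.map J2)
  have key123 := Submodule.finrank_sup_add_finrank_inf_eq (Dp.map J1 ⊔ Dp.map J2) (Dp.map J3)
  rw [disj12, finrank_bot, add_zero] at key12
  rw [disj123, finrank_bot, add_zero] at key123
  refine ⟨orth12, orth13, orth23, nd1, nd2, nd3, direct, ?_⟩
  rw [key123, key12, fr1, fr2, fr3]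
  ring
end

section
/- In the pointwise model of a paraquaternionic CR-submanifold, let ν^⊥ := ν₁ + ν₂ + ν₃ and let ν := {u ∈ W^⊥ : g(u, n) = 0 for all n ∈ ν^⊥} be the g-orthogonal complement of ν^⊥ in W^⊥. Then J_α(ν) = ν for α = 1, 2, 3. -/
/-- Pointwise model of a paraquaternionic CR-submanifold: with
`ν^⊥ := ν₁ + ν₂ + ν₃` (where `ν_α := J_α(D^⊥)`) and `ν` the `g`-orthogonal
complement of `ν^⊥` in `W^⊥`, one has `J_α(ν) = ν` for `α = 1, 2, 3`. -/
theorem paraquaternionic_CR_nu_invariant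
    (V : Type*) [AddCommGroup V] [Module ℝ V] [FiniteDimensional ℝ V]
    (g : LinearMap.BilinForm ℝ V)
    (hsymm : ∀ x y : V, g x y = g y x)
    (hnd : g.Nondegenerate)
    (J1 J2 J3 : V →ₗ[ℝ] V)
    (h11 : J1 ∘ₗ J1 = -LinearMap.id)
    (h22 : J2 ∘ₗ J2 = LinearMap.id)
    (h33 : J3 ∘ₗ J3 = LinearMap.id)
    (h12 : J1 ∘ₗ J2 = -J3) (h21 : J2 ∘ₗ J1 = J3)
    (h23 : J2 ∘ₗ J3 = J1) (h32 : J3 ∘ₗ J2 = -J1)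
    (h31 : J3 ∘ₗ J1 = -J2) (h13 : J1 ∘ₗ J3 = J2)
    (hg1 : ∀ x y : V, g (J1 x) (J1 y) = g x y)
    (hg2 : ∀ x y : V, g (J2 x) (J2 y) = -g x y)
    (hg3 : ∀ x y : V, g (J3 x) (J3 y) = -g x y)
    (W D : Submodule ℝ V) (hDW : D ≤ W)
    (hWnd : ∀ w ∈ W, (∀ w' ∈ W, g w w' = 0) → w = 0)
    (hDnd : ∀ d ∈ D, (∀ d' ∈ D, g d d' = 0) → d = 0)
    (hJ1D : D.map J1 = D) (hJ2D : D.map J2 = D) (hJ3D : D.map J3 = D)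
    (hCR1 : (orthIn g W D).map J1 ≤ orthIn g ⊤ W)
    (hCR2 : (orthIn g W D).map J2 ≤ orthIn g ⊤ W)
    (hCR3 : (orthIn g W D).map J3 ≤ orthIn g ⊤ W)
    (nuperp : Submodule ℝ V)
    (hnuperp : nuperp =
      (orthIn g W D).map J1 ⊔ (orthIn g W D).map J2 ⊔ (orthIn g W D).map J3)
    (nu : Submodule ℝ V)
    (hnu : nu = orthIn g (orthIn g ⊤ W) nuperp) :
    nu.map J1 = nu ∧ nu.map J2 = nu ∧ nu.map J3 = nu := by
  classical
  -- pointwise versions of the composition identities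
  have hJ1sq : ∀ v : V, J1 (J1 v) = -v := fun v => by
    have := congrFun (congrArg (DFunLike.coe) h11) v; simpa using this
  have hJ2sq : ∀ v : V, J2 (J2 v) = v := fun v => by
    have := congrFun (congrArg (DFunLike.coe) h22) v; simpa using this
  have hJ3sq : ∀ v : V, J3 (J3 v) = v := fun v => by
    have := congrFun (congrArg (DFunLike.coe) h33) v; simpa using this
  have c12 : ∀ v : V, J1 (J2 v) = -(J3 v) := fun v => by
    have := congrFun (congrArg (DFunLike.coe) h12) v; simpa using this
  have c21 : ∀ v : V, J2 (J1 v) = J3 v := fun v => by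
    have := congrFun (congrArg (DFunLike.coe) h21) v; simpa using this
  have c23 : ∀ v : V, J2 (J3 v) = J1 v := fun v => by
    have := congrFun (congrArg (DFunLike.coe) h23) v; simpa using this
  have c32 : ∀ v : V, J3 (J2 v) = -(J1 v) := fun v => by
    have := congrFun (congrArg (DFunLike.coe) h32) v; simpa using this
  have c31 : ∀ v : V, J3 (J1 v) = -(J2 v) := fun v => by
    have := congrFun (congrArg (DFunLike.coe) h31) v; simpa using this
  have c13 : ∀ v : V, J1 (J3 v) = J2 v := fun v => by
    have := congrFun (congrArg (DFunLike.coe) h13) v; simpa using this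
  -- skew-adjointness of the three structures
  have sk1 : ∀ x y : V, g (J1 x) y = - g x (J1 y) := fun x y => by
    have h := hg1 x (J1 y)
    rw [hJ1sq, map_neg] at h
    linarith
  have sk2 : ∀ x y : V, g (J2 x) y = - g x (J2 y) := fun x y => by
    have h := hg2 x (J2 y)
    rw [hJ2sq] at h
    linarith
  have sk3 : ∀ x y : V, g (J3 x) y = - g x (J3 y) := fun x y => by
    have h := hg3 x (J3 y)
    rw [hJ3sq] at h
    linarith
  set Dp : Submodule ℝ V := orthIn g W D with hDp
  have memDp : ∀ x : V, x ∈ Dp ↔ x ∈ W ∧ ∀ s ∈ D, g x s = 0 := fun x => Iff.rfl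
  -- decomposition W = D + Dp
  have hDsplit : ∀ w ∈ W, ∃ d ∈ D, ∃ u ∈ Dp, w = d + u := by
    have hrefl : g.IsRefl := fun x y h => by rw [hsymm]; exact h
    have hndD : (g.restrict D).Nondegenerate := by
      refine ⟨fun d hd => ?_, fun d hd => ?_⟩
      · have : (d : V) = 0 := hDnd d d.2 (fun d' hd' => hd ⟨d', hd'⟩)
        exact Subtype.ext this
      · have : (d : V) = 0 := hDnd d d.2 (fun d' hd' => by rw [hsymm]; exact hd ⟨d', hd'⟩)
        exact Subtype.ext this
    have hcompl : IsCompl D (g.orthogonal D) :=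
      (LinearMap.BilinForm.restrict_nondegenerate_iff_isCompl_orthogonal hrefl).mp hndD
    intro w hw
    have : w ∈ D ⊔ g.orthogonal D := by rw [hcompl.sup_eq_top]; trivial
    rcases Submodule.mem_sup.mp this with ⟨d, hd, u, hu, rfl⟩
    refine ⟨d, hd, u, ?_, rfl⟩
    refine (memDp u).mpr ⟨?_, fun s hs => ?_⟩
    · have : u = (d + u) - d := by abel
      rw [this]; exact W.sub_mem hw (hDW hd)
    · rw [hsymm]; exact hu s hs
  set K : Submodule ℝ V := W ⊔ nuperp with hK
  have hWK : W ≤ K := le_sup_left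
  have hnpK : nuperp ≤ K := le_sup_right
  have hmapnp1 : Dp.map J1 ≤ nuperp := by rw [hnuperp]; exact le_sup_of_le_left le_sup_left
  have hmapnp2 : Dp.map J2 ≤ nuperp := by rw [hnuperp]; exact le_sup_of_le_left le_sup_right
  have hmapnp3 : Dp.map J3 ≤ nuperp := by rw [hnuperp]; exact le_sup_right
  -- each J maps W into K
  have hJW : ∀ (J : V →ₗ[ℝ] V), D.map J = D → Dp.map J ≤ nuperp →
      ∀ w ∈ W, J w ∈ K := by
    intro J hJD hJDp w hw
    rcases hDsplit w hw with ⟨d, hd, u, hu, rfl⟩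
    rw [map_add]
    refine K.add_mem (hWK (hDW ?_)) (hnpK (hJDp ⟨u, hu, rfl⟩))
    rw [← hJD]; exact ⟨d, hd, rfl⟩
  have hJ1W : ∀ w ∈ W, J1 w ∈ K := hJW J1 hJ1D hmapnp1
  have hJ2W : ∀ w ∈ W, J2 w ∈ K := hJW J2 hJ2D hmapnp2
  have hJ3W : ∀ w ∈ W, J3 w ∈ K := hJW J3 hJ3D hmapnp3
  have hDpW : ∀ u ∈ Dp, u ∈ W := fun u hu => ((memDp u).mp hu).1
  -- each J maps nuperp into K
  have hJnp : ∀ (J : V →ₗ[ℝ] V),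
      (∀ u ∈ Dp, J (J1 u) ∈ K) → (∀ u ∈ Dp, J (J2 u) ∈ K) → (∀ u ∈ Dp, J (J3 u) ∈ K) →
      ∀ n ∈ nuperp, J n ∈ K := by
    intro J hh1 hh2 hh3 n hn
    have : nuperp ≤ K.comap J := by
      rw [hnuperp]
      refine sup_le (sup_le ?_ ?_) ?_ <;>
        · rw [Submodule.map_le_iff_le_comap]
          rintro u hu
          first
            | exact hh1 u hu | exact hh2 u hu | exact hh3 u hu
    exact this hn
  have hJ1np : ∀ n ∈ nuperp, J1 n ∈ K := by
    refine hJnp J1 (fun u hu => ?_) (fun u hu => ?_) (fun u hu => ?_)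
    · rw [hJ1sq]; exact K.neg_mem (hWK (hDpW u hu))
    · rw [c12]; exact K.neg_mem (hnpK (hmapnp3 ⟨u, hu, rfl⟩))
    · rw [c13]; exact hnpK (hmapnp2 ⟨u, hu, rfl⟩)
  have hJ2np : ∀ n ∈ nuperp, J2 n ∈ K := by
    refine hJnp J2 (fun u hu => ?_) (fun u hu => ?_) (fun u hu => ?_)
    · rw [c21]; exact hnpK (hmapnp3 ⟨u, hu, rfl⟩)
    · rw [hJ2sq]; exact hWK (hDpW u hu)
    · rw [c23]; exact hnpK (hmapnp1 ⟨u, hu, rfl⟩)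
  have hJ3np : ∀ n ∈ nuperp, J3 n ∈ K := by
    refine hJnp J3 (fun u hu => ?_) (fun u hu => ?_) (fun u hu => ?_)
    · rw [c31]; exact K.neg_mem (hnpK (hmapnp2 ⟨u, hu, rfl⟩))
    · rw [c32]; exact K.neg_mem (hnpK (hmapnp1 ⟨u, hu, rfl⟩))
    · rw [hJ3sq]; exact hWK (hDpW u hu)
  -- elements of nu are orthogonal to K
  have hxK : ∀ x ∈ nu, ∀ k ∈ K, g x k = 0 := by
    intro x hx k hk
    rw [hnu] at hx
    obtain ⟨hxW, hxnp⟩ := hx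
    obtain ⟨-, hxW'⟩ : x ∈ (⊤ : Submodule ℝ V) ∧ ∀ w ∈ W, g x w = 0 := hxW
    rcases Submodule.mem_sup.mp hk with ⟨a, ha, b, hb, rfl⟩
    rw [map_add, hxW' a ha, hxnp b hb, add_zero]
  -- the key invariance statement
  have hinv : ∀ (J : V →ₗ[ℝ] V), (∀ x y : V, g (J x) y = - g x (J y)) →
      (∀ w ∈ W, J w ∈ K) → (∀ n ∈ nuperp, J n ∈ K) → ∀ x ∈ nu, J x ∈ nu := by
    intro J skJ hJW' hJnp' x hx
    rw [hnu]
    refine ⟨⟨trivial, fun w hw => ?_⟩, fun n hn => ?_⟩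
    · rw [skJ, hxK x hx (J w) (hJW' w hw), neg_zero]
    · rw [skJ, hxK x hx (J n) (hJnp' n hn), neg_zero]
  have hinv1 : ∀ x ∈ nu, J1 x ∈ nu := hinv J1 sk1 hJ1W hJ1np
  have hinv2 : ∀ x ∈ nu, J2 x ∈ nu := hinv J2 sk2 hJ2W hJ2np
  have hinv3 : ∀ x ∈ nu, J3 x ∈ nu := hinv J3 sk3 hJ3W hJ3np
  refine ⟨le_antisymm ?_ ?_, le_antisymm ?_ ?_, le_antisymm ?_ ?_⟩
  · rintro _ ⟨x, hx, rfl⟩; exact hinv1 x hx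
  · intro x hx
    refine ⟨-(J1 x), nu.neg_mem (hinv1 x hx), ?_⟩
    rw [map_neg, hJ1sq, neg_neg]
  · rintro _ ⟨x, hx, rfl⟩; exact hinv2 x hx
  · intro x hx
    exact ⟨J2 x, hinv2 x hx, hJ2sq x⟩
  · rintro _ ⟨x, hx, rfl⟩; exact hinv3 x hx
  · intro x hx
    exact ⟨J3 x, hinv3 x hx, hJ3sq x⟩
end

section
/- In the pointwise model of a paraquaternionic CR-submanifold, the paraquaternionic subspace generated by W decomposes as W + J₁(W) + J₂(W) + J₃(W) = W ⊕ ν^⊥, where ν^⊥ := ν₁ + ν₂ + ν₃; that is, the subspace sum W + J₁(W) + J₂(W) + J₃(W) equals W + ν^⊥, this sum is direct, and W is g-orthogonal to ν^⊥. -/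
set_option maxHeartbeats 4000000 in
/-- Pointwise model of a paraquaternionic CR-submanifold: the paraquaternionic
subspace generated by `W` decomposes as `W + J₁(W) + J₂(W) + J₃(W) = W ⊕ ν^⊥`,
where `ν^⊥ := ν₁ + ν₂ + ν₃` with `ν_α := J_α(D^⊥)`: the two subspace sums agree,
`W ∩ ν^⊥ = 0`, and `W` is `g`-orthogonal to `ν^⊥`. -/
theorem paraquaternionic_CR_generated_subspace
    (V : Type*) [AddCommGroup V] [Module ℝ V] [FiniteDimensional ℝ V]
    (g : LinearMap.BilinForm ℝ V)
    (hsymm : ∀ x y : V, g x y = g y x)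
    (hnd : g.Nondegenerate)
    (J1 J2 J3 : V →ₗ[ℝ] V)
    (h11 : J1 ∘ₗ J1 = -LinearMap.id)
    (h22 : J2 ∘ₗ J2 = LinearMap.id)
    (h33 : J3 ∘ₗ J3 = LinearMap.id)
    (h12 : J1 ∘ₗ J2 = -J3) (h21 : J2 ∘ₗ J1 = J3)
    (h23 : J2 ∘ₗ J3 = J1) (h32 : J3 ∘ₗ J2 = -J1)
    (h31 : J3 ∘ₗ J1 = -J2) (h13 : J1 ∘ₗ J3 = J2)
    (hg1 : ∀ x y : V, g (J1 x) (J1 y) = g x y)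
    (hg2 : ∀ x y : V, g (J2 x) (J2 y) = -g x y)
    (hg3 : ∀ x y : V, g (J3 x) (J3 y) = -g x y)
    (W D : Submodule ℝ V) (hDW : D ≤ W)
    (hWnd : ∀ w ∈ W, (∀ w' ∈ W, g w w' = 0) → w = 0)
    (hDnd : ∀ d ∈ D, (∀ d' ∈ D, g d d' = 0) → d = 0)
    (hJ1D : D.map J1 = D) (hJ2D : D.map J2 = D) (hJ3D : D.map J3 = D)
    (hCR1 : (orthIn g W D).map J1 ≤ orthIn g ⊤ W)
    (hCR2 : (orthIn g W D).map J2 ≤ orthIn g ⊤ W)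
    (hCR3 : (orthIn g W D).map J3 ≤ orthIn g ⊤ W)
    (nuperp : Submodule ℝ V)
    (hnuperp : nuperp =
      (orthIn g W D).map J1 ⊔ (orthIn g W D).map J2 ⊔ (orthIn g W D).map J3) :
    W ⊔ W.map J1 ⊔ W.map J2 ⊔ W.map J3 = W ⊔ nuperp ∧
    W ⊓ nuperp = ⊥ ∧
    (∀ w ∈ W, ∀ n ∈ nuperp, g w n = 0) := by

  subst hnuperp
  -- g is reflexive
  have hrefl : g.IsRefl := fun x y h => by rw [hsymm]; exact h
  -- restriction of g to D is nondegenerate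
  have hrest : (g.restrict D).Nondegenerate := by
    refine ⟨?_, ?_⟩
    · rintro ⟨d, hd⟩ h
      have := hDnd d hd (fun d' hd' => h ⟨d', hd'⟩)
      exact Subtype.ext this
    · rintro ⟨d, hd⟩ h
      have := hDnd d hd (fun d' hd' => by rw [hsymm]; exact h ⟨d', hd'⟩)
      exact Subtype.ext this
  have hcompl := g.isCompl_orthogonal_of_restrict_nondegenerate hrefl hrest
  -- orthIn g W D = W ⊓ g.orthogonal D
  have horth : orthIn g W D = W ⊓ g.orthogonal D := by
    ext x
    simp only [Submodule.mem_inf, LinearMap.BilinForm.mem_orthogonal_iff]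
    constructor
    · rintro ⟨hxW, hx⟩
      exact ⟨hxW, fun n hn => hrefl _ _ (hx n hn)⟩
    · rintro ⟨hxW, hx⟩
      exact ⟨hxW, fun s hs => hrefl _ _ (hx s hs)⟩
  -- W = D ⊔ orthIn g W D
  have hWdec : W = D ⊔ orthIn g W D := by
    rw [horth, inf_comm, ← sup_inf_assoc_of_le _ hDW, hcompl.sup_eq_top, top_inf_eq]
  have hOW : orthIn g W D ≤ W := fun x hx => hx.1
  -- nuperp ⊥ W
  have hperp : Submodule.map J1 (orthIn g W D) ⊔ Submodule.map J2 (orthIn g W D) ⊔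
      Submodule.map J3 (orthIn g W D) ≤ orthIn g ⊤ W :=
    sup_le (sup_le hCR1 hCR2) hCR3
  refine ⟨?_, ?_, ?_⟩
  · apply le_antisymm
    · have key : ∀ J : V →ₗ[ℝ] V, D.map J = D →
          (orthIn g W D).map J ≤ Submodule.map J1 (orthIn g W D) ⊔
            Submodule.map J2 (orthIn g W D) ⊔ Submodule.map J3 (orthIn g W D) →
          W.map J ≤ W ⊔ (Submodule.map J1 (orthIn g W D) ⊔
            Submodule.map J2 (orthIn g W D) ⊔ Submodule.map J3 (orthIn g W D)) := by
        intro J hJD hJn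
        conv_lhs => rw [hWdec]
        rw [Submodule.map_sup, hJD]
        exact sup_le (le_sup_of_le_left hDW) (le_sup_of_le_right hJn)
      refine sup_le (sup_le (sup_le le_sup_left ?_) ?_) ?_
      · exact key J1 hJ1D (le_sup_of_le_left le_sup_left)
      · exact key J2 hJ2D (le_sup_of_le_left le_sup_right)
      · exact key J3 hJ3D le_sup_right
    · refine sup_le (le_sup_of_le_left (le_sup_of_le_left le_sup_left)) ?_
      refine sup_le (sup_le ?_ ?_) ?_
      · exact le_trans (Submodule.map_mono hOW)
          (le_sup_of_le_left (le_sup_of_le_left le_sup_right))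
      · exact le_trans (Submodule.map_mono hOW) (le_sup_of_le_left le_sup_right)
      · exact le_trans (Submodule.map_mono hOW) le_sup_right
  · rw [eq_bot_iff]
    intro x hx
    obtain ⟨hxW, hxn⟩ := Submodule.mem_inf.mp hx
    exact hWnd x hxW (hperp hxn).2
  · intro w hw n hn
    have := (hperp hn).2 w hw
    rw [hsymm]
    exact this
end

section
/- Let E be a real vector space and h : V × V → E an ℝ-bilinear map such that h(X, X) + ε_α h(J_α X, J_α X) = 0 for all X ∈ V and each α = 1, 2, 3. Then h(X, X) = 0 for all X ∈ V. (This is the key algebraic step in the proof that the paraquaternionic distribution of a paraquaternionic CR-submanifold of a paraquaternionic Kähler manifold is minimal, applied to the second fundamental form h of the distribution.) -/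
/-- Key algebraic step in the proof that the paraquaternionic distribution of a
paraquaternionic CR-submanifold is minimal: if `h` is an `ℝ`-bilinear map with
`h(X, X) + ε_α h(J_α X, J_α X) = 0` for all `X` and each `α` (with
`ε₁ = 1, ε₂ = ε₃ = −1`), then `h(X, X) = 0` for all `X`. -/
theorem bilinear_diag_vanishes_of_paraquaternionic
    (V E : Type*) [AddCommGroup V] [Module ℝ V] [AddCommGroup E] [Module ℝ E]
    (J1 J2 J3 : V →ₗ[ℝ] V)
    (h11 : J1 ∘ₗ J1 = -LinearMap.id)
    (h22 : J2 ∘ₗ J2 = LinearMap.id)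
    (h33 : J3 ∘ₗ J3 = LinearMap.id)
    (h12 : J1 ∘ₗ J2 = -J3) (h21 : J2 ∘ₗ J1 = J3)
    (h23 : J2 ∘ₗ J3 = J1) (h32 : J3 ∘ₗ J2 = -J1)
    (h31 : J3 ∘ₗ J1 = -J2) (h13 : J1 ∘ₗ J3 = J2)
    (h : V →ₗ[ℝ] V →ₗ[ℝ] E)
    (hh1 : ∀ x : V, h x x + h (J1 x) (J1 x) = 0)
    (hh2 : ∀ x : V, h x x - h (J2 x) (J2 x) = 0)
    (hh3 : ∀ x : V, h x x - h (J3 x) (J3 x) = 0) :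
    ∀ x : V, h x x = 0 := by
  intro x
  have key : J2 (J1 x) = J3 x := LinearMap.congr_fun h21 x
  have e1 := hh1 x
  have e2 := hh2 (J1 x)
  have e3 := hh3 x
  rw [key, sub_eq_zero] at e2
  rw [sub_eq_zero] at e3
  rw [e2, ← e3] at e1
  have h2 : (2:ℝ) • h x x = 0 := by rw [two_smul]; exact e1
  exact (smul_eq_zero.mp h2).resolve_left two_ne_zero
end

section
/- Let B : V × V → V be a symmetric ℝ-bilinear map such that B(X, J_α Y) = J_α(B(X, Y)) for all X, Y ∈ V and each α = 1, 2, 3. Then B = 0. (This is the algebraic core of the proof that for a generic paraquaternionic CR-submanifold of a paraquaternionic Kähler manifold the paraquaternionic distribution is geodesic, applied to the second fundamental form B.) -/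
/-- Algebraic core of the proof that for a generic paraquaternionic CR-submanifold
the paraquaternionic distribution is geodesic: a symmetric `ℝ`-bilinear map
`B : V × V → V` satisfying `B(X, J_α Y) = J_α(B(X, Y))` for each `α` vanishes. -/
theorem symm_bilinear_commuting_with_paraquaternionic_vanishes
    (V : Type*) [AddCommGroup V] [Module ℝ V]
    (J1 J2 J3 : V →ₗ[ℝ] V)
    (h11 : J1 ∘ₗ J1 = -LinearMap.id)
    (h22 : J2 ∘ₗ J2 = LinearMap.id)
    (h33 : J3 ∘ₗ J3 = LinearMap.id)
    (h12 : J1 ∘ₗ J2 = -J3) (h21 : J2 ∘ₗ J1 = J3)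
    (h23 : J2 ∘ₗ J3 = J1) (h32 : J3 ∘ₗ J2 = -J1)
    (h31 : J3 ∘ₗ J1 = -J2) (h13 : J1 ∘ₗ J3 = J2)
    (B : V →ₗ[ℝ] V →ₗ[ℝ] V)
    (hBsymm : ∀ x y : V, B x y = B y x)
    (hB1 : ∀ x y : V, B x (J1 y) = J1 (B x y))
    (hB2 : ∀ x y : V, B x (J2 y) = J2 (B x y))
    (hB3 : ∀ x y : V, B x (J3 y) = J3 (B x y)) :
    ∀ x y : V, B x y = 0 := by
  intro x y
  have hJ11 : ∀ v, J1 (J1 v) = -v := fun v => by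
    simpa using LinearMap.congr_fun h11 v
  have hJ22 : ∀ v, J2 (J2 v) = v := fun v => by
    simpa using LinearMap.congr_fun h22 v
  have hJ33 : ∀ v, J3 (J3 v) = v := fun v => by
    simpa using LinearMap.congr_fun h33 v
  have hJ3 : ∀ v, J2 (J1 v) = J3 v := fun v => by
    simpa using LinearMap.congr_fun h21 v
  have key1 : ∀ a b : V, B (J1 a) (J1 b) = -(B a b) := fun a b => by
    rw [hB1, hBsymm (J1 a) b, hB1, hJ11, hBsymm]
  have key2 : ∀ a b : V, B (J2 a) (J2 b) = B a b := fun a b => by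
    rw [hB2, hBsymm (J2 a) b, hB2, hJ22, hBsymm]
  have key3 : B (J3 x) (J3 y) = B x y := by
    rw [hB3, hBsymm (J3 x) y, hB3, hJ33, hBsymm]
  have key3' : B (J3 x) (J3 y) = -(B x y) := by
    rw [← hJ3, ← hJ3, key2, key1]
  have h : B x y + B x y = 0 := by
    have := key3.symm.trans key3'
    rw [eq_neg_iff_add_eq_zero] at this
    exact this
  have h2 : (2:ℝ) • B x y = 0 := by rw [two_smul]; exact h
  simpa using (smul_eq_zero.mp h2).resolve_left (by norm_num)
end

section
/- Let V be a finite-dimensional real vector space with a nondegenerate symmetric bilinear form g, and let J : V → V be a linear map with J² = −id and g(J X, J Y) = g(X, Y) for all X, Y ∈ V. Then there exists a g-orthogonal direct sum decomposition V = P ⊕ Q with g positive definite on P and g negative definite on Q such that dim P and dim Q are both even. (Supporting lemma: the compatible complex structure J₁ of an adapted metric forces both parts of the signature to be even, so that an almost paraquaternionic hermitian manifold has dimension 4m.) -/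
set_option maxHeartbeats 2000000

open Module Submodule

private lemma assemble {V : Type*} [AddCommGroup V] [Module ℝ V] [FiniteDimensional ℝ V]
    (g : LinearMap.BilinForm ℝ V)
    (W U : Submodule ℝ V)
    (hinf : W ⊓ U = ⊥) (hsup : W ⊔ U = ⊤)
    (hWU : ∀ w ∈ W, ∀ u ∈ U, g w u = 0)
    (hUW : ∀ u ∈ U, ∀ w ∈ W, g u w = 0)
    (hWpos : ∀ w ∈ W, w ≠ 0 → 0 < g w w)
    (hWeven : Even (Module.finrank ℝ W))
    (P0 Q0 : Submodule ℝ V) (hP0 : P0 ≤ U) (hQ0 : Q0 ≤ U)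
    (hsup0 : P0 ⊔ Q0 = U)
    (horth0 : ∀ p ∈ P0, ∀ q ∈ Q0, g p q = 0)
    (hpos0 : ∀ p ∈ P0, p ≠ 0 → 0 < g p p)
    (hneg0 : ∀ q ∈ Q0, q ≠ 0 → g q q < 0)
    (hPe : Even (Module.finrank ℝ P0)) (hQe : Even (Module.finrank ℝ Q0)) :
    ∃ P Q : Submodule ℝ V,
      P ⊓ Q = ⊥ ∧ P ⊔ Q = ⊤ ∧
      (∀ p ∈ P, ∀ q ∈ Q, g p q = 0) ∧
      (∀ p ∈ P, p ≠ 0 → 0 < g p p) ∧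
      (∀ q ∈ Q, q ≠ 0 → g q q < 0) ∧
      Even (Module.finrank ℝ P) ∧ Even (Module.finrank ℝ Q) := by
  refine ⟨W ⊔ P0, Q0, ?_, ?_, ?_, ?_, hneg0, ?_, hQe⟩
  · -- inf
    have hpos : ∀ p ∈ W ⊔ P0, p ≠ 0 → 0 < g p p := by
      intro p hp hpne
      obtain ⟨w, hw, p0, hp0, rfl⟩ := Submodule.mem_sup.mp hp
      have hcross1 : g w p0 = 0 := hWU w hw p0 (hP0 hp0)
      have hcross2 : g p0 w = 0 := hUW p0 (hP0 hp0) w hw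
      have hval : g (w + p0) (w + p0) = g w w + g p0 p0 := by
        simp only [map_add, LinearMap.add_apply, hcross1, hcross2]
        ring
      rw [hval]
      rcases eq_or_ne w 0 with rfl | hwne
      · have hp0ne : p0 ≠ 0 := by simpa using hpne
        have := hpos0 p0 hp0 hp0ne
        simpa using this
      · have h1 : 0 < g w w := hWpos w hw hwne
        rcases eq_or_ne p0 0 with rfl | hp0ne
        · simpa using h1
        · have h2 := hpos0 p0 hp0 hp0ne
          linarith
    rw [eq_bot_iff]
    intro v hv
    obtain ⟨hv1, hv2⟩ := Submodule.mem_inf.mp hv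
    rw [Submodule.mem_bot]
    by_contra hvne
    exact absurd (hpos v hv1 hvne) (not_lt.mpr (hneg0 v hv2 hvne).le)
  · rw [sup_assoc, hsup0, hsup]
  · intro p hp q hq
    obtain ⟨w, hw, p0, hp0, rfl⟩ := Submodule.mem_sup.mp hp
    have h1 : g w q = 0 := hWU w hw q (hQ0 hq)
    have h2 : g p0 q = 0 := horth0 p0 hp0 q hq
    simp [h1, h2]
  · intro p hp hpne
    obtain ⟨w, hw, p0, hp0, rfl⟩ := Submodule.mem_sup.mp hp
    have hcross1 : g w p0 = 0 := hWU w hw p0 (hP0 hp0)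
    have hcross2 : g p0 w = 0 := hUW p0 (hP0 hp0) w hw
    have hval : g (w + p0) (w + p0) = g w w + g p0 p0 := by
      simp only [map_add, LinearMap.add_apply, hcross1, hcross2]
      ring
    rw [hval]
    rcases eq_or_ne w 0 with rfl | hwne
    · have hp0ne : p0 ≠ 0 := by simpa using hpne
      have := hpos0 p0 hp0 hp0ne
      simpa using this
    · have h1 : 0 < g w w := hWpos w hw hwne
      rcases eq_or_ne p0 0 with rfl | hp0ne
      · simpa using h1
      · have h2 := hpos0 p0 hp0 hp0ne
        linarith
  · -- evenness
    have hdisj : W ⊓ P0 = ⊥ := by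
      rw [eq_bot_iff, ← hinf]
      exact inf_le_inf_left W hP0
    have := Submodule.finrank_sup_add_finrank_inf_eq W P0
    rw [hdisj, finrank_bot, add_zero] at this
    rw [this]
    exact hWeven.add hPe

private theorem aux_even_sig : ∀ (n : ℕ) (V : Type u) [AddCommGroup V] [Module ℝ V]
    [FiniteDimensional ℝ V]
    (g : LinearMap.BilinForm ℝ V),
    (∀ x y : V, g x y = g y x) → g.Nondegenerate →
    ∀ (J : V →ₗ[ℝ] V), J ∘ₗ J = -LinearMap.id → (∀ x y : V, g (J x) (J y) = g x y) →
    Module.finrank ℝ V ≤ n →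
    ∃ P Q : Submodule ℝ V,
      P ⊓ Q = ⊥ ∧ P ⊔ Q = ⊤ ∧
      (∀ p ∈ P, ∀ q ∈ Q, g p q = 0) ∧
      (∀ p ∈ P, p ≠ 0 → 0 < g p p) ∧
      (∀ q ∈ Q, q ≠ 0 → g q q < 0) ∧
      Even (Module.finrank ℝ P) ∧ Even (Module.finrank ℝ Q) := by
  intro n
  induction n with
  | zero =>
    intro V _ _ _ g hsymm hnd J hJ hgJ hrk
    -- trivial space
    have : finrank ℝ V = 0 := Nat.le_zero.mp hrk
    have hbot : (⊤ : Submodule ℝ V) = ⊥ := Submodule.finrank_eq_zero.mp (by simpa using this)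
    refine ⟨⊥, ⊥, by simp, by simp [hbot], ?_, ?_, ?_, by simp, by simp⟩
    · intro p hp q hq; simp [(Submodule.mem_bot _).mp hp]
    · intro p hp hpne; exact absurd ((Submodule.mem_bot _).mp hp) hpne
    · intro q hq hqne; exact absurd ((Submodule.mem_bot _).mp hq) hqne
  | succ m ih =>
    intro V _ _ _ g hsymm hnd J hJ hgJ hrk
    have hrefl : g.IsRefl := fun a b h => by rw [hsymm]; exact h
    have hJJ : ∀ v : V, J (J v) = -v := by
      intro v
      have := LinearMap.ext_iff.mp hJ v
      simpa using this
    by_cases hex : ∃ x : V, g x x ≠ 0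
    · obtain ⟨x, hx⟩ := hex
      have hxne : x ≠ 0 := by rintro rfl; simp at hx
      have hxJx : g x (J x) = 0 := by
        have h1 : g (J x) (J (J x)) = g x (J x) := hgJ x (J x)
        rw [hJJ x] at h1
        have h2 : g (J x) (-x) = -(g (J x) x) := by simp
        rw [h2, hsymm (J x) x] at h1
        linarith
      have hJxJx : g (J x) (J x) = g x x := hgJ x x
      set W : Submodule ℝ V := Submodule.span ℝ {x, J x} with hW
      have hxW : x ∈ W := Submodule.subset_span (by simp)
      have hJxW : J x ∈ W := Submodule.subset_span (by simp)
      -- value formula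
      have hval : ∀ a b : ℝ, g (a • x + b • J x) (a • x + b • J x) = (a ^ 2 + b ^ 2) * g x x := by
        intro a b
        simp only [map_add, map_smul, LinearMap.add_apply, LinearMap.smul_apply, smul_eq_mul]
        rw [hxJx, hsymm (J x) x, hxJx, hJxJx]
        ring
      have hcoeff : ∀ a b : ℝ, a • x + b • J x = 0 → a = 0 ∧ b = 0 := by
        intro a b hab
        have h1 : a * g x x = 0 := by
          have h0 : g x (a • x + b • J x) = a * g x x := by
            simp [hxJx, mul_comm]
          rw [hab] at h0
          simp only [map_zero] at h0
          exact h0.symm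
        have ha : a = 0 := by
          rcases mul_eq_zero.mp h1 with h | h
          · exact h
          · exact absurd h hx
        subst ha
        simp only [zero_smul, zero_add] at hab
        have hJxne : J x ≠ 0 := by
          intro h
          apply hxne
          have := hJJ x
          rw [h] at this
          simpa using this.symm
        constructor
        · rfl
        · rcases smul_eq_zero.mp hab with h | h
          · exact h
          · exact absurd h hJxne
      -- definiteness of g on W (up to the sign of g x x)
      have hWform : ∀ w ∈ W, ∃ a b : ℝ, w = a • x + b • J x := by
        intro w hw
        obtain ⟨a, b, hab⟩ := Submodule.mem_span_pair.mp hw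
        exact ⟨a, b, hab.symm⟩
      have hWdef : ∀ w ∈ W, w ≠ 0 → g w w * g x x > 0 := by
        intro w hw hwne
        obtain ⟨a, b, rfl⟩ := hWform w hw
        rw [hval]
        have hab : a ^ 2 + b ^ 2 > 0 := by
          rcases lt_or_eq_of_le (by positivity : (0:ℝ) ≤ a ^ 2 + b ^ 2) with h | h
          · exact h
          · exfalso
            have ha : a = 0 := by nlinarith [sq_nonneg a, sq_nonneg b]
            have hb : b = 0 := by nlinarith [sq_nonneg a, sq_nonneg b]
            exact hwne (by simp [ha, hb])
        have : g x x ^ 2 > 0 := by positivity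
        nlinarith
      have hWzero : ∀ w ∈ W, g w w = 0 → w = 0 := by
        intro w hw h
        by_contra hwne
        have := hWdef w hw hwne
        rw [h] at this
        simp at this
      -- nondegeneracy of restriction
      have hWnd : (g.restrict W).Nondegenerate := by
        constructor <;>
        · rintro ⟨w, hw⟩ h
          have := h ⟨w, hw⟩
          simp only [LinearMap.BilinForm.restrict_apply] at this
          exact Subtype.ext (hWzero w hw this)
      have hcompl : IsCompl W (g.orthogonal W) :=
        g.isCompl_orthogonal_of_restrict_nondegenerate hrefl hWnd
      set U : Submodule ℝ V := g.orthogonal W with hU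
      have hWUo : ∀ w ∈ W, ∀ u ∈ U, g w u = 0 := by
        intro w hw u hu
        exact hu w hw
      have hUWo : ∀ u ∈ U, ∀ w ∈ W, g u w = 0 := by
        intro u hu w hw
        exact hrefl _ _ (hu w hw)
      -- W is J-invariant
      have hWJ : ∀ w ∈ W, J w ∈ W := by
        intro w hw
        obtain ⟨a, b, rfl⟩ := hWform w hw
        have : J (a • x + b • J x) = a • J x + b • (-x) := by
          rw [map_add, map_smul, map_smul, hJJ]
        rw [this]
        exact Submodule.add_mem _ (Submodule.smul_mem _ _ hJxW)
          (Submodule.smul_mem _ _ (Submodule.neg_mem _ hxW))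
      -- U is J-invariant
      have hUJ : ∀ u ∈ U, J u ∈ U := by
        intro u hu w hw
        have h1 : g (J w) (J (J u)) = g w (J u) := hgJ w (J u)
        rw [hJJ u] at h1
        have h2 : g (J w) (-u) = -(g (J w) u) := by simp
        rw [h2] at h1
        have h3 : g (J w) u = 0 := hu (J w) (hWJ w hw)
        unfold U at *
        rw [h3] at h1
        linarith [h1]
      -- restricted data
      set J' : U →ₗ[ℝ] U := J.restrict hUJ with hJ'
      have hJ'2 : J' ∘ₗ J' = -LinearMap.id := by
        apply LinearMap.ext
        rintro ⟨u, hu⟩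
        apply Subtype.ext
        simp only [hJ', LinearMap.comp_apply, LinearMap.restrict_apply, LinearMap.neg_apply,
          LinearMap.id_apply]
        exact hJJ u
      set g' := g.restrict U with hg'
      have hg'symm : ∀ a b : U, g' a b = g' b a := by
        rintro ⟨a, ha⟩ ⟨b, hb⟩
        simpa [hg'] using hsymm a b
      have hg'nd : g'.Nondegenerate := by
       have hL : LinearMap.SeparatingLeft g' := by
        rintro ⟨u, hu⟩ h
        have hzero : ∀ v : V, g u v = 0 := by
          intro v
          have hv : v ∈ W ⊔ U := by rw [hcompl.sup_eq_top]; trivial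
          obtain ⟨w, hw, u', hu', rfl⟩ := Submodule.mem_sup.mp hv
          have h1 : g u w = 0 := hUWo u hu w hw
          have h2 : g u u' = 0 := by
            have := h ⟨u', hu'⟩
            simpa [hg'] using this
          simp [h1, h2]
        exact Subtype.ext (hnd.1 u hzero)
       exact ⟨hL, fun y hy => hL y fun x => (hg'symm y x).trans (hy x)⟩
      have hg'J : ∀ a b : U, g' (J' a) (J' b) = g' a b := by
        rintro ⟨a, ha⟩ ⟨b, hb⟩
        simpa [hg', hJ'] using hgJ a b
      -- dimension bound
      have hbneW : x ∈ W := hxW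
      have hWfr : finrank ℝ W = 2 := by
        have hli : LinearIndependent ℝ ![x, J x] :=
          LinearIndependent.pair_iff.mpr hcoeff
        have hspan : Submodule.span ℝ (Set.range ![x, J x]) = W := by
          congr 1
          ext v
          simp only [Matrix.range_cons, Matrix.range_empty, Set.union_empty,
            Set.union_singleton, Set.mem_insert_iff, Set.mem_singleton_iff]
          tauto
        have := finrank_span_eq_card hli
        rw [hspan] at this
        simpa using this
      have hsum : finrank ℝ W + finrank ℝ U = finrank ℝ V :=
        Submodule.finrank_add_eq_of_isCompl hcompl
      have hUrk : finrank ℝ U ≤ m := by omega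
      obtain ⟨P', Q', hinf', hsup', horth', hpos', hneg', hPe', hQe'⟩ :=
        ih U g' hg'symm hg'nd J' hJ'2 hg'J hUrk
      -- push forward
      set P0 : Submodule ℝ V := P'.map U.subtype with hP0def
      set Q0 : Submodule ℝ V := Q'.map U.subtype with hQ0def
      have hP0le : P0 ≤ U := by
        intro v hv
        obtain ⟨⟨p, hp⟩, _, rfl⟩ := hv
        exact hp
      have hQ0le : Q0 ≤ U := by
        intro v hv
        obtain ⟨⟨q, hq⟩, _, rfl⟩ := hv
        exact hq
      have hsup0 : P0 ⊔ Q0 = U := by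
        rw [hP0def, hQ0def, ← Submodule.map_sup, hsup', Submodule.map_subtype_top]
      have horth0 : ∀ p ∈ P0, ∀ q ∈ Q0, g p q = 0 := by
        rintro p ⟨⟨p', hp'⟩, hpm, rfl⟩ q ⟨⟨q', hq'⟩, hqm, rfl⟩
        have := horth' _ hpm _ hqm
        simpa [hg'] using this
      have hpos0 : ∀ p ∈ P0, p ≠ 0 → 0 < g p p := by
        rintro p ⟨⟨p', hp'⟩, hpm, rfl⟩ hpne
        have hne' : (⟨p', hp'⟩ : U) ≠ 0 := by
          intro h
          apply hpne
          rw [h]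
          rfl
        have := hpos' _ hpm hne'
        simpa [hg'] using this
      have hneg0 : ∀ q ∈ Q0, q ≠ 0 → g q q < 0 := by
        rintro q ⟨⟨q', hq'⟩, hqm, rfl⟩ hqne
        have hne' : (⟨q', hq'⟩ : U) ≠ 0 := by
          intro h
          apply hqne
          rw [h]
          rfl
        have := hneg' _ hqm hne'
        simpa [hg'] using this
      have hP0fr : finrank ℝ P0 = finrank ℝ P' := Submodule.finrank_map_subtype_eq U P'
      have hQ0fr : finrank ℝ Q0 = finrank ℝ Q' := Submodule.finrank_map_subtype_eq U Q'
      have hP0e : Even (finrank ℝ P0) := hP0fr ▸ hPe'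
      have hQ0e : Even (finrank ℝ Q0) := hQ0fr ▸ hQe'
      have hWeven : Even (finrank ℝ W) := ⟨1, by omega⟩
      -- split on sign of g x x
      rcases hx.lt_or_gt with hneg | hpos
      · -- g x x < 0 : W is negative definite; apply assemble to -g
        have hWneg : ∀ w ∈ W, w ≠ 0 → (-g) w w > 0 := by
          intro w hw hwne
          have := hWdef w hw hwne
          have hlt : g w w < 0 := by nlinarith
          simp only [LinearMap.neg_apply]
          linarith
        obtain ⟨P, Q, h1, h2, h3, h4, h5, h6, h7⟩ :=
          assemble (-g) W U hcompl.inf_eq_bot hcompl.sup_eq_top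
            (by intro w hw u hu; simp [hWUo w hw u hu])
            (by intro u hu w hw; simp [hUWo u hu w hw])
            hWneg hWeven Q0 P0 hQ0le hP0le
            (by rw [sup_comm]; exact hsup0)
            (by intro p hp q hq
                have h := horth0 q hq p hp
                have h2 : g p q = 0 := by rw [hsymm p q]; exact h
                simp [h2])
            (by intro q hq hqne
                have := hneg0 q hq hqne
                simp only [LinearMap.neg_apply]
                linarith)
            (by intro p hp hpne
                have := hpos0 p hp hpne
                simp only [LinearMap.neg_apply]
                linarith)
            hQ0e hP0e
        refine ⟨Q, P, by rw [inf_comm]; exact h1, by rw [sup_comm]; exact h2, ?_, ?_, ?_, h7, h6⟩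
        · intro p hp q hq
          have h := h3 q hq p hp
          simp only [LinearMap.neg_apply, neg_eq_zero] at h
          rw [hsymm p q]
          exact h
        · intro p hp hpne
          have := h5 p hp hpne
          simp only [LinearMap.neg_apply] at this
          linarith
        · intro q hq hqne
          have := h4 q hq hqne
          simp only [LinearMap.neg_apply] at this
          linarith
      · -- g x x > 0 : W is positive definite
        have hWpos : ∀ w ∈ W, w ≠ 0 → 0 < g w w := by
          intro w hw hwne
          have := hWdef w hw hwne
          nlinarith
        exact assemble g W U hcompl.inf_eq_bot hcompl.sup_eq_top hWUo hUWo hWpos hWeven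
          P0 Q0 hP0le hQ0le hsup0 horth0 hpos0 hneg0 hP0e hQ0e
    · -- g x x ≡ 0 ⇒ g = 0 ⇒ V trivial
      push_neg at hex
      have hgzero : ∀ x y : V, g x y = 0 := by
        intro x y
        have h1 := hex (x + y)
        have h2 := hex x
        have h3 := hex y
        have h4 : g (x + y) (x + y) = g x x + g x y + g y x + g y y := by
          simp only [map_add, LinearMap.add_apply]
          ring
        rw [h1, h2, h3, hsymm y x] at h4
        linarith
      have hVtriv : ∀ v : V, v = 0 := fun v => hnd.1 v fun w => hgzero v w
      have hbot : (⊤ : Submodule ℝ V) = ⊥ := by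
        rw [eq_bot_iff]
        intro v _
        rw [Submodule.mem_bot]
        exact hVtriv v
      refine ⟨⊥, ⊥, by simp, by simp [hbot], ?_, ?_, ?_, by simp, by simp⟩
      · intro p hp q hq; simp [(Submodule.mem_bot _).mp hp]
      · intro p hp hpne; exact absurd ((Submodule.mem_bot _).mp hp) hpne
      · intro q hq hqne; exact absurd ((Submodule.mem_bot _).mp hq) hqne

/-- Supporting lemma: if a finite-dimensional real vector space carries a
nondegenerate symmetric bilinear form `g` and a compatible complex structure `J`
(`J² = −id`, `g(JX, JY) = g(X, Y)`), then there is a `g`-orthogonal direct sum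
decomposition `V = P ⊕ Q` with `g` positive definite on `P`, negative definite on
`Q`, and both `dim P` and `dim Q` even. -/
theorem compatible_complex_structure_forces_even_signature
    (V : Type*) [AddCommGroup V] [Module ℝ V] [FiniteDimensional ℝ V]
    (g : LinearMap.BilinForm ℝ V)
    (hsymm : ∀ x y : V, g x y = g y x)
    (hnd : g.Nondegenerate)
    (J : V →ₗ[ℝ] V)
    (hJ : J ∘ₗ J = -LinearMap.id)
    (hgJ : ∀ x y : V, g (J x) (J y) = g x y) :
    ∃ P Q : Submodule ℝ V,
      P ⊓ Q = ⊥ ∧ P ⊔ Q = ⊤ ∧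
      (∀ p ∈ P, ∀ q ∈ Q, g p q = 0) ∧
      (∀ p ∈ P, p ≠ 0 → 0 < g p p) ∧
      (∀ q ∈ Q, q ≠ 0 → g q q < 0) ∧
      Even (Module.finrank ℝ P) ∧ Even (Module.finrank ℝ Q) := by
  exact aux_even_sig (Module.finrank ℝ V) V g hsymm hnd J hJ hgJ le_rfl
end

section
/- Let (a_{αβ}) be a real 3×3 matrix satisfying Σ_{γ=1}^{3} ε_γ a_{γα} a_{γβ} = ε_α δ_{αβ} for all α, β ∈ {1, 2, 3} (i.e. it preserves the quadratic form diag(1, −1, −1), as does the transition matrix A ∈ SO(2,1) between two canonical local bases). Set J'_α := Σ_{β=1}^{3} a_{αβ} J_β and Ω'_α(X, Y) := g(X, J'_α Y). Then Σ_{α=1}^{3} ε_α Ω'_α(X, Y) Ω'_α(Z, T) = Σ_{α=1}^{3} ε_α Ω_α(X, Y) Ω_α(Z, T) for all X, Y, Z, T ∈ V. (This expresses that the fundamental 4-form Ω = Ω₁∧Ω₁ − Ω₂∧Ω₂ − Ω₃∧Ω₃ of an almost paraquaternionic hermitian manifold is globally well defined, independently of the choice of canonical local basis.) -/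
/-- The fundamental 4-form of an almost paraquaternionic hermitian manifold is
well defined: if the real `3×3` matrix `(a_{αβ})` preserves the quadratic form
`diag(1, −1, −1)` (i.e. `Σ_γ ε_γ a_{γα} a_{γβ} = ε_α δ_{αβ}`) and
`J'_α := Σ_β a_{αβ} J_β`, `Ω'_α(X, Y) := g(X, J'_α Y)`, then
`Σ_α ε_α Ω'_α(X, Y) Ω'_α(Z, T) = Σ_α ε_α Ω_α(X, Y) Ω_α(Z, T)`. -/
theorem fundamental_four_form_well_defined
    (V : Type*) [AddCommGroup V] [Module ℝ V]
    (g : V →ₗ[ℝ] V →ₗ[ℝ] ℝ)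
    (J : Fin 3 → (V →ₗ[ℝ] V))
    (ε : Fin 3 → ℝ) (hε0 : ε 0 = 1) (hε1 : ε 1 = -1) (hε2 : ε 2 = -1)
    (a : Matrix (Fin 3) (Fin 3) ℝ)
    (ha : ∀ α β : Fin 3,
      ∑ γ : Fin 3, ε γ * a γ α * a γ β = ε α * (if α = β then 1 else 0))
    (J' : Fin 3 → (V →ₗ[ℝ] V))
    (hJ' : ∀ α : Fin 3, J' α = ∑ β : Fin 3, a α β • J β) :
    ∀ X Y Z T : V,
      ∑ α : Fin 3, ε α * (g X (J' α Y)) * (g Z (J' α T)) =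
      ∑ α : Fin 3, ε α * (g X (J α Y)) * (g Z (J α T)) := by
  intro X Y Z T
  have h1 : ∀ (α : Fin 3) (W U : V), g W (J' α U) = ∑ β : Fin 3, a α β * g W (J β U) := by
    intro α W U
    rw [hJ']
    simp [LinearMap.sum_apply, LinearMap.smul_apply, map_sum, smul_eq_mul]
  calc
    ∑ α : Fin 3, ε α * (g X (J' α Y)) * (g Z (J' α T))
        = ∑ α : Fin 3, ∑ β : Fin 3, ∑ γ : Fin 3,
            (ε α * a α β * a α γ) * (g X (J β Y) * g Z (J γ T)) := by
          refine Finset.sum_congr rfl fun α _ => ?_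
          rw [h1, h1]
          simp only [Finset.mul_sum, Finset.sum_mul]
          rw [Finset.sum_comm]
          refine Finset.sum_congr rfl fun β _ => Finset.sum_congr rfl fun γ _ => ?_
          ring
    _ = ∑ β : Fin 3, ∑ γ : Fin 3,
            (∑ α : Fin 3, ε α * a α β * a α γ) * (g X (J β Y) * g Z (J γ T)) := by
          rw [Finset.sum_comm]
          refine Finset.sum_congr rfl fun β _ => ?_
          rw [Finset.sum_comm]
          refine Finset.sum_congr rfl fun γ _ => ?_
          rw [Finset.sum_mul]
    _ = ∑ α : Fin 3, ε α * (g X (J α Y)) * (g Z (J α T)) := by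
          simp only [ha]
          simp [Finset.sum_ite_eq, mul_assoc]
end
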